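/- Let h : ℝ → ℝ be a C³ function periodic of period L > 0. Then h satisfies (H1), (H2) and (H3) if and only if there exists an integer N ≥ 1 such that: (1) h has exactly 2N zeros a₁ < a₂ < ⋯ < a_{2N} in one period [0, L), all simple; (2) h has exactly 2N critical points in [0, L), interlaced with the zeros, i.e. exactly one critical point bⱼ in each open arc between consecutive zeros (cyclically), and at each such bⱼ one has h(bⱼ)·h''(bⱼ) < 0; (3) on each open arc between consecutive zeros, h has constant sign and |h| is concave. -/

import Mathlib

/-- (H1): every zero of `h` is simple. -/
def CondH1 (h : ℝ → ℝ) : Prop := ∀ a : ℝ, h a = 0 → deriv h a ≠ 0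

/-- (H2): every critical point of `h` is nondegenerate. -/
def CondH2 (h : ℝ → ℝ) : Prop := ∀ b : ℝ, deriv h b = 0 → deriv (deriv h) b ≠ 0

/-- (H3): the convexity-type condition `h·h'' ≤ 0`. -/
def CondH3 (h : ℝ → ℝ) : Prop := ∀ x : ℝ, h x * deriv (deriv h) x ≤ 0

/-- The right endpoint of the (cyclic) open arc of the circle `ℝ/Lℤ`
determined by the consecutive zeros `a j` and `a (j+1)` (with the last arc
closing up periodically at `a 0 + L`). -/
def arcEnd (L : ℝ) {m : ℕ} (a : Fin m → ℝ) (j : Fin m) : ℝ :=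
  if hj : (j : ℕ) + 1 < m then a ⟨(j : ℕ) + 1, hj⟩
  else a ⟨0, Nat.lt_of_le_of_lt (Nat.zero_le _) j.isLt⟩ + L

section GeomCharAux
open Set Filter Topology


theorem periodic_deriv'' {f : ℝ → ℝ} {c : ℝ} (hf : Function.Periodic f c) :
    Function.Periodic (deriv f) c := fun x => by
  have hfun : (fun y => f (y + c)) = f := funext hf
  rw [← deriv_comp_add_const, hfun]

theorem reduce_mod {L : ℝ} (hL : 0 < L) (x : ℝ) :
    ∃ y ∈ Set.Ico (0:ℝ) L, ∀ g : ℝ → ℝ, Function.Periodic g L → g y = g x := by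
  refine ⟨x - ⌊x / L⌋ * L, ⟨Int.sub_floor_div_mul_nonneg x hL, Int.sub_floor_div_mul_lt x hL⟩,
    fun g hg => hg.sub_int_mul_eq _⟩

theorem deriv_nonpos_of_antitoneOn {f : ℝ → ℝ} {α β x : ℝ} (hx : x ∈ Set.Ioo α β)
    (hf : AntitoneOn f (Set.Ioo α β)) (hd : DifferentiableAt ℝ f x) : deriv f x ≤ 0 := by
  have hslope : Tendsto (slope f x) (𝓝[>] x) (𝓝 (deriv f x)) :=
    (hasDerivAt_iff_tendsto_slope.1 hd.hasDerivAt).mono_left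
      (nhdsWithin_mono _ fun y hy => ne_of_gt hy)
  refine le_of_tendsto hslope ?_
  filter_upwards [Ioo_mem_nhdsGT_of_mem ⟨le_refl x, hx.2⟩] with y hy
  have : f y ≤ f x := hf hx ⟨hx.1.trans hy.1, hy.2⟩ hy.1.le
  have hyx : 0 < y - x := sub_pos.2 hy.1
  rw [slope_def_field]
  exact div_nonpos_of_nonpos_of_nonneg (by linarith) hyx.le

theorem deriv_nonneg_of_monotoneOn {f : ℝ → ℝ} {α β x : ℝ} (hx : x ∈ Set.Ioo α β)
    (hf : MonotoneOn f (Set.Ioo α β)) (hd : DifferentiableAt ℝ f x) : 0 ≤ deriv f x := by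
  have := deriv_nonpos_of_antitoneOn hx hf.neg hd.neg
  rw [deriv.fun_neg] at this; linarith

theorem concaveOn_congr'' {s : Set ℝ} {f g : ℝ → ℝ} (hf : ConcaveOn ℝ s f)
    (hfg : ∀ x ∈ s, f x = g x) : ConcaveOn ℝ s g := by
  refine ⟨hf.1, fun x hx y hy a b ha hb hab => ?_⟩
  rw [← hfg x hx, ← hfg y hy, ← hfg _ (hf.1 hx hy ha hb hab)]
  exact hf.2 hx hy ha hb hab

theorem c3_facts (h : ℝ → ℝ) (hreg : ContDiff ℝ 3 h) :
    Differentiable ℝ h ∧ Differentiable ℝ (deriv h) ∧ Continuous (deriv (deriv h)) := by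
  have hreg' : ContDiff ℝ ((2 + 1 : ℕ) : WithTop ℕ∞) h := by exact_mod_cast hreg
  have h2' : ContDiff ℝ ((2:ℕ) : WithTop ℕ∞) (deriv^[1] h) := ContDiff.iterate_deriv' 2 1 hreg'
  simp only [Function.iterate_one] at h2'
  have h2 : ContDiff ℝ 2 (deriv h) := by exact_mod_cast h2'
  exact ⟨hreg.differentiable (by norm_num), h2.differentiable (by norm_num),
    h2.continuous_deriv (by norm_num)⟩

theorem injOn_near {h : ℝ → ℝ} (hd1 : Differentiable ℝ h) (hc1 : Continuous (deriv h))
    {x : ℝ} (hx : deriv h x ≠ 0) :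
    ∃ δ > 0, Set.InjOn h (Set.Ioo (x - δ) (x + δ)) := by
  rcases hx.lt_or_gt with hneg | hpos
  · have hopen : IsOpen {y | deriv h y < 0} := isOpen_lt hc1 continuous_const
    rcases Metric.isOpen_iff.1 hopen x hneg with ⟨δ, hδ, hball⟩
    refine ⟨δ, hδ, StrictAntiOn.injOn ?_⟩
    refine strictAntiOn_of_deriv_neg (convex_Ioo _ _) hd1.continuous.continuousOn ?_
    intro y hy
    rw [interior_Ioo] at hy
    exact hball (by rwa [Real.ball_eq_Ioo])
  · have hopen : IsOpen {y | 0 < deriv h y} := isOpen_lt continuous_const hc1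
    rcases Metric.isOpen_iff.1 hopen x hpos with ⟨δ, hδ, hball⟩
    refine ⟨δ, hδ, StrictMonoOn.injOn ?_⟩
    refine strictMonoOn_of_deriv_pos (convex_Ioo _ _) hd1.continuous.continuousOn ?_
    intro y hy
    rw [interior_Ioo] at hy
    exact hball (by rwa [Real.ball_eq_Ioo])

theorem zeros_finite {L : ℝ} {h : ℝ → ℝ} (hd1 : Differentiable ℝ h)
    (hc1 : Continuous (deriv h)) (H1 : ∀ a : ℝ, h a = 0 → deriv h a ≠ 0) :
    Set.Finite {x ∈ Set.Icc (0:ℝ) L | h x = 0} := by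
  by_contra hinf
  rw [← Set.not_infinite, not_not] at hinf
  obtain ⟨z, hzK, hacc⟩ := hinf.exists_accPt_of_subset_isCompact isCompact_Icc
    (fun x hx => hx.1)
  have hZc : IsClosed {x ∈ Set.Icc (0:ℝ) L | h x = 0} :=
    (isClosed_Icc.inter (isClosed_singleton.preimage hd1.continuous : IsClosed (h ⁻¹' {0})))
  have hz0 : h z = 0 := by
    have := mem_closure_iff_clusterPt.2 (AccPt.clusterPt hacc)
    rw [hZc.closure_eq] at this
    exact this.2
  obtain ⟨δ, hδ, hinj⟩ := injOn_near hd1 hc1 (H1 z hz0)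
  rw [accPt_iff_nhds] at hacc
  obtain ⟨y, ⟨hyU, hyZ⟩, hyz⟩ := hacc (Set.Ioo (z - δ) (z + δ))
    (Ioo_mem_nhds (by linarith) (by linarith))
  exact hyz (hinj hyU (by constructor <;> linarith) (hyZ.2.trans hz0.symm))

-- no strict local interior min with negative second derivative
theorem no_min (h : ℝ → ℝ) (hd1 : Differentiable ℝ h) (hd2 : Differentiable ℝ (deriv h))
    (hc2 : Continuous (deriv (deriv h))) {x1 : ℝ} (hcrit : deriv h x1 = 0)
    (hneg : deriv (deriv h) x1 < 0) (hmin : ∀ y, h x1 ≤ h y) : False := by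
  have hopen : IsOpen {y | deriv (deriv h) y < 0} := isOpen_lt hc2 continuous_const
  rcases Metric.isOpen_iff.1 hopen x1 hneg with ⟨δ, hδ, hball⟩
  rw [Real.ball_eq_Ioo] at hball
  have hanti : StrictAntiOn (deriv h) (Set.Ioo (x1 - δ) (x1 + δ)) := by
    refine strictAntiOn_of_deriv_neg (convex_Ioo _ _) hd2.continuous.continuousOn ?_
    intro y hy; rw [interior_Ioo] at hy; exact hball hy
  have hderivneg : ∀ y ∈ Set.Ioo x1 (x1 + δ), deriv h y < 0 := by
    intro y hy
    have := hanti (by constructor <;> [linarith; linarith])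
      (⟨by linarith [hy.1], hy.2⟩ : y ∈ Set.Ioo (x1 - δ) (x1 + δ)) hy.1
    rwa [hcrit] at this
  have hanti2 : StrictAntiOn h (Set.Icc x1 (x1 + δ/2)) := by
    refine strictAntiOn_of_deriv_neg (convex_Icc _ _) hd1.continuous.continuousOn ?_
    intro y hy; rw [interior_Icc] at hy
    exact hderivneg y ⟨hy.1, by linarith [hy.2]⟩
  have : h (x1 + δ/2) < h x1 :=
    hanti2 (by constructor <;> linarith) (by constructor <;> linarith) (by linarith)
  exact absurd (hmin (x1 + δ/2)) (by linarith)

theorem no_max (h : ℝ → ℝ) (hd1 : Differentiable ℝ h) (hd2 : Differentiable ℝ (deriv h))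
    (hc2 : Continuous (deriv (deriv h))) {x0 : ℝ} (hcrit : deriv h x0 = 0)
    (hpos : 0 < deriv (deriv h) x0) (hmax : ∀ y, h y ≤ h x0) : False := by
  have hopen : IsOpen {y | 0 < deriv (deriv h) y} := isOpen_lt continuous_const hc2
  rcases Metric.isOpen_iff.1 hopen x0 hpos with ⟨δ, hδ, hball⟩
  rw [Real.ball_eq_Ioo] at hball
  have hmono : StrictMonoOn (deriv h) (Set.Ioo (x0 - δ) (x0 + δ)) := by
    refine strictMonoOn_of_deriv_pos (convex_Ioo _ _) hd2.continuous.continuousOn ?_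
    intro y hy; rw [interior_Ioo] at hy; exact hball hy
  have hderivpos : ∀ y ∈ Set.Ioo x0 (x0 + δ), 0 < deriv h y := by
    intro y hy
    have := hmono (by constructor <;> [linarith; linarith])
      (⟨by linarith [hy.1], hy.2⟩ : y ∈ Set.Ioo (x0 - δ) (x0 + δ)) hy.1
    rwa [hcrit] at this
  have hmono2 : StrictMonoOn h (Set.Icc x0 (x0 + δ/2)) := by
    refine strictMonoOn_of_deriv_pos (convex_Icc _ _) hd1.continuous.continuousOn ?_
    intro y hy; rw [interior_Icc] at hy
    exact hderivpos y ⟨hy.1, by linarith [hy.2]⟩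
  have : h x0 < h (x0 + δ/2) :=
    hmono2 (by constructor <;> linarith) (by constructor <;> linarith) (by linarith)
  exact absurd (hmax (x0 + δ/2)) (by linarith)

theorem exists_zero {L : ℝ} (hL : 0 < L) {h : ℝ → ℝ} (hper : Function.Periodic h L)
    (hd1 : Differentiable ℝ h) (hd2 : Differentiable ℝ (deriv h))
    (hc2 : Continuous (deriv (deriv h)))
    (H2 : ∀ b : ℝ, deriv h b = 0 → deriv (deriv h) b ≠ 0)
    (H3 : ∀ x : ℝ, h x * deriv (deriv h) x ≤ 0) :
    ∃ z ∈ Set.Ico (0:ℝ) L, h z = 0 := by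
  by_contra hno
  push_neg at hno
  have hnz : ∀ x : ℝ, h x ≠ 0 := by
    intro x
    obtain ⟨y, hy, hyx⟩ := reduce_mod hL x
    rw [← hyx h hper]
    exact hno y hy
  -- h has constant sign on ℝ
  have hsign : (∀ x : ℝ, 0 < h x) ∨ (∀ x : ℝ, h x < 0) := by
    rcases (hnz 0).lt_or_gt with hneg | hpos
    · refine Or.inr fun x => ?_
      by_contra hx
      push_neg at hx
      have hx' : 0 < h x := (hnz x).lt_or_gt.resolve_left (by linarith)
      obtain ⟨c, _, hc⟩ := intermediate_value_uIcc (a := 0) (b := x) (f := h)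
        hd1.continuous.continuousOn (show (0:ℝ) ∈ Set.uIcc (h 0) (h x) by
          rw [Set.mem_uIcc]; left; constructor <;> linarith)
      exact hnz c hc
    · refine Or.inl fun x => ?_
      by_contra hx
      push_neg at hx
      have hx' : h x < 0 := (hnz x).lt_or_gt.resolve_right (by linarith)
      obtain ⟨c, _, hc⟩ := intermediate_value_uIcc (a := 0) (b := x) (f := h)
        hd1.continuous.continuousOn (show (0:ℝ) ∈ Set.uIcc (h 0) (h x) by
          rw [Set.mem_uIcc]; right; constructor <;> linarith)
      exact hnz c hc
  rcases hsign with hpos | hneg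
  · -- global minimum
    obtain ⟨x1, _, hx1⟩ := isCompact_Icc.exists_isMinOn (Set.nonempty_Icc.2 hL.le)
      hd1.continuous.continuousOn
    have hmin : ∀ y, h x1 ≤ h y := by
      intro y
      obtain ⟨y', hy', hyx⟩ := reduce_mod hL y
      rw [← hyx h hper]
      exact hx1 ⟨hy'.1, hy'.2.le⟩
    have hcrit : deriv h x1 = 0 :=
      IsLocalMin.deriv_eq_zero (Filter.Eventually.of_forall hmin)
    have hle : deriv (deriv h) x1 ≤ 0 := by nlinarith [H3 x1, hpos x1]
    have hne := H2 x1 hcrit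
    exact no_min h hd1 hd2 hc2 hcrit (lt_of_le_of_ne hle hne) hmin
  · obtain ⟨x0, _, hx0⟩ := isCompact_Icc.exists_isMaxOn (Set.nonempty_Icc.2 hL.le)
      hd1.continuous.continuousOn
    have hmax : ∀ y, h y ≤ h x0 := by
      intro y
      obtain ⟨y', hy', hyx⟩ := reduce_mod hL y
      rw [← hyx h hper]
      exact hx0 ⟨hy'.1, hy'.2.le⟩
    have hcrit : deriv h x0 = 0 :=
      IsLocalMax.deriv_eq_zero (Filter.Eventually.of_forall hmax)
    have hge : 0 ≤ deriv (deriv h) x0 := by nlinarith [H3 x0, hneg x0]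
    have hne := H2 x0 hcrit
    exact no_max h hd1 hd2 hc2 hcrit (lt_of_le_of_ne hge (Ne.symm hne)) hmax


theorem cover_lemma {L : ℝ} (hL : 0 < L) {N : ℕ} (hN : 1 ≤ N) (a : Fin (2 * N) → ℝ)
    (hmono : StrictMono a) (haIco : ∀ j, a j ∈ Set.Ico (0 : ℝ) L)
    {x : ℝ} (hx : x ∈ Set.Ico (0:ℝ) L) :
    (∃ j, x = a j) ∨ (∃ j, x ∈ Set.Ioo (a j) (arcEnd L a j)) ∨
      (x + L ∈ Set.Ioo (a ⟨2 * N - 1, by omega⟩) (arcEnd L a ⟨2 * N - 1, by omega⟩)) := by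
  have h2N : 0 < 2 * N := by omega
  set jl : Fin (2 * N) := ⟨2 * N - 1, by omega⟩ with hjl
  set j0 : Fin (2 * N) := ⟨0, h2N⟩ with hj0
  have hjlv : (jl : ℕ) = 2 * N - 1 := rfl
  have harcl : arcEnd L a jl = a j0 + L := by
    rw [arcEnd]
    have : ¬ ((jl : ℕ) + 1 < 2 * N) := by omega
    rw [dif_neg this]
  by_cases hlt : x < a j0
  · right; right
    rw [harcl]
    have h1 : a jl < L := (haIco jl).2
    exact ⟨by linarith [hx.1], by linarith⟩
  push_neg at hlt
  by_cases hgt : a jl < x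
  · right; left
    exact ⟨jl, by rw [harcl]; exact ⟨hgt, by linarith [hx.2, (haIco j0).1]⟩⟩
  push_neg at hgt
  -- a j0 ≤ x ≤ a jl : take the largest j with a j ≤ x
  have hne : (Finset.univ.filter (fun j : Fin (2*N) => a j ≤ x)).Nonempty :=
    ⟨j0, by simp [hlt]⟩
  set js := (Finset.univ.filter (fun j : Fin (2*N) => a j ≤ x)).max' hne with hjs
  have hjsle : a js ≤ x := by
    have := (Finset.univ.filter (fun j : Fin (2*N) => a j ≤ x)).max'_mem hne
    simpa using this
  rcases eq_or_lt_of_le hjsle with heq | hlt2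
  · exact Or.inl ⟨js, heq.symm⟩
  right; left
  have hjsne : js ≠ jl := by
    intro hh; rw [hh] at hlt2; exact absurd hgt (not_le.2 hlt2)
  have hjslt : (js : ℕ) + 1 < 2 * N := by
    have := js.isLt
    rcases Nat.lt_or_ge ((js:ℕ)+1) (2*N) with hh | hh
    · exact hh
    · exact absurd (Fin.ext (by omega : (js:ℕ) = (jl:ℕ))) hjsne

  refine ⟨js, ?_⟩
  have harc : arcEnd L a js = a ⟨(js:ℕ)+1, hjslt⟩ := by rw [arcEnd, dif_pos hjslt]
  rw [harc]
  refine ⟨hlt2, ?_⟩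
  by_contra hcon
  push_neg at hcon
  have : (⟨(js:ℕ)+1, hjslt⟩ : Fin (2*N)) ∈ Finset.univ.filter (fun j : Fin (2*N) => a j ≤ x) := by
    simp [hcon]
  have hle := Finset.le_max' _ _ this
  rw [← hjs] at hle
  have : (js:ℕ) + 1 ≤ (js:ℕ) := hle
  omega

theorem H3_at_point {h : ℝ → ℝ} (hd1 : Differentiable ℝ h) (hd2 : Differentiable ℝ (deriv h))
    {α β y : ℝ} (hy : y ∈ Set.Ioo α β)
    (hsign : (∀ x ∈ Set.Ioo α β, 0 < h x) ∨ (∀ x ∈ Set.Ioo α β, h x < 0))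
    (hconc : ConcaveOn ℝ (Set.Ioo α β) (fun x => |h x|)) :
    h y * deriv (deriv h) y ≤ 0 := by
  rcases hsign with hpos | hneg
  · have hch : ConcaveOn ℝ (Set.Ioo α β) h :=
      concaveOn_congr'' hconc (fun x hx => abs_of_pos (hpos x hx))
    have hanti : AntitoneOn (deriv h) (Set.Ioo α β) :=
      hch.antitoneOn_deriv (fun x _ => hd1 x)
    have h2 : deriv (deriv h) y ≤ 0 := deriv_nonpos_of_antitoneOn hy hanti (hd2 y)
    exact mul_nonpos_of_nonneg_of_nonpos (hpos y hy).le h2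
  · have hch : ConcaveOn ℝ (Set.Ioo α β) (fun x => - h x) :=
      concaveOn_congr'' hconc (fun x hx => abs_of_neg (hneg x hx))
    have hanti : AntitoneOn (deriv (fun x => - h x)) (Set.Ioo α β) :=
      hch.antitoneOn_deriv (fun x _ => (hd1 x).neg)
    have hmono : MonotoneOn (deriv h) (Set.Ioo α β) := by
      intro u hu v hv huv
      have := hanti hu hv huv
      simpa [deriv.neg] using this
    have h2 : 0 ≤ deriv (deriv h) y := deriv_nonneg_of_monotoneOn hy hmono (hd2 y)
    exact mul_nonpos_of_nonpos_of_nonneg (hneg y hy).le h2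

theorem reverse_dir (L : ℝ) (hL : 0 < L) (h : ℝ → ℝ)
    (hd1 : Differentiable ℝ h) (hd2 : Differentiable ℝ (deriv h))
    (hper : Function.Periodic h L)
    {N : ℕ} (hN : 1 ≤ N) (a : Fin (2 * N) → ℝ)
    (hmono : StrictMono a) (haIco : ∀ j, a j ∈ Set.Ico (0 : ℝ) L)
    (hzeros : {x ∈ Set.Ico (0 : ℝ) L | h x = 0} = Set.range a)
    (hderiv : ∀ j, deriv h (a j) ≠ 0)
    (hcrit : ∀ j : Fin (2 * N),
      (∃! b : ℝ, b ∈ Set.Ioo (a j) (arcEnd L a j) ∧ deriv h b = 0) ∧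
      (∀ b ∈ Set.Ioo (a j) (arcEnd L a j), deriv h b = 0 →
        h b * deriv (deriv h) b < 0))
    (hsg : ∀ j : Fin (2 * N),
      ((∀ x ∈ Set.Ioo (a j) (arcEnd L a j), 0 < h x) ∨
        (∀ x ∈ Set.Ioo (a j) (arcEnd L a j), h x < 0)) ∧
      ConcaveOn ℝ (Set.Ioo (a j) (arcEnd L a j)) (fun x => |h x|)) :
    (∀ x : ℝ, h x = 0 → deriv h x ≠ 0) ∧ (∀ b : ℝ, deriv h b = 0 → deriv (deriv h) b ≠ 0)
      ∧ (∀ x : ℝ, h x * deriv (deriv h) x ≤ 0) := by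
  have hper1 : Function.Periodic (deriv h) L := periodic_deriv'' hper
  have hper2 : Function.Periodic (deriv (deriv h)) L := periodic_deriv'' hper1
  set jl : Fin (2*N) := ⟨2 * N - 1, by omega⟩ with hjl
  -- points of arcs are nonzeros of h
  have harcne : ∀ j : Fin (2*N), ∀ y ∈ Set.Ioo (a j) (arcEnd L a j), h y ≠ 0 := by
    intro j y hy
    rcases (hsg j).1 with hp | hn
    · exact ne_of_gt (hp y hy)
    · exact ne_of_lt (hn y hy)
  constructor
  · -- H1
    intro x hx0
    obtain ⟨y, hy, hyx⟩ := reduce_mod hL x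
    have hy0 : h y = 0 := by rw [hyx h hper]; exact hx0
    have hymem : y ∈ {x ∈ Set.Ico (0 : ℝ) L | h x = 0} := ⟨hy, hy0⟩
    rw [hzeros] at hymem
    obtain ⟨j, hj⟩ := hymem
    rw [← hyx (deriv h) hper1, ← hj]
    exact hderiv j
  constructor
  · -- H2
    intro x hx0
    obtain ⟨y, hy, hyx⟩ := reduce_mod hL x
    have hy0 : deriv h y = 0 := by rw [hyx (deriv h) hper1]; exact hx0
    rw [← hyx (deriv (deriv h)) hper2]
    rcases cover_lemma hL hN a hmono haIco hy with ⟨j, hj⟩ | ⟨j, hj⟩ | hj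
    · exact absurd (hj ▸ hy0) (hderiv j)
    · have := (hcrit j).2 y hj hy0
      intro hc; rw [hc, mul_zero] at this; exact lt_irrefl 0 this
    · have hy0' : deriv h (y + L) = 0 := by rw [hper1 y]; exact hy0
      have := (hcrit jl).2 (y + L) hj hy0'
      intro hc
      rw [hper2 y, hc, mul_zero] at this
      exact lt_irrefl 0 this
  · -- H3
    intro x
    obtain ⟨y, hy, hyx⟩ := reduce_mod hL x
    rw [← hyx h hper, ← hyx (deriv (deriv h)) hper2]
    rcases cover_lemma hL hN a hmono haIco hy with ⟨j, hj⟩ | ⟨j, hj⟩ | hj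
    · have : h y = 0 := by
        rw [hj]
        have : a j ∈ {x ∈ Set.Ico (0 : ℝ) L | h x = 0} := by
          rw [hzeros]; exact ⟨j, rfl⟩
        exact this.2
      rw [this, zero_mul]
    · exact H3_at_point hd1 hd2 hj (hsg j).1 (hsg j).2
    · have := H3_at_point hd1 hd2 hj (hsg jl).1 (hsg jl).2
      rwa [hper y, hper2 y] at this

set_option maxHeartbeats 2000000 in
theorem forward_dir (L : ℝ) (hL : 0 < L) (h : ℝ → ℝ)
    (hd1 : Differentiable ℝ h) (hd2 : Differentiable ℝ (deriv h))
    (hc2 : Continuous (deriv (deriv h))) (hper : Function.Periodic h L)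
    (H1 : ∀ a : ℝ, h a = 0 → deriv h a ≠ 0)
    (H2 : ∀ b : ℝ, deriv h b = 0 → deriv (deriv h) b ≠ 0)
    (H3 : ∀ x : ℝ, h x * deriv (deriv h) x ≤ 0) :
    ∃ N : ℕ, 1 ≤ N ∧ ∃ a : Fin (2 * N) → ℝ,
      StrictMono a ∧ (∀ j, a j ∈ Set.Ico (0 : ℝ) L) ∧
      ({x ∈ Set.Ico (0 : ℝ) L | h x = 0} = Set.range a) ∧
      (∀ j, deriv h (a j) ≠ 0) ∧
      (∀ j : Fin (2 * N),
        (∃! b : ℝ, b ∈ Set.Ioo (a j) (arcEnd L a j) ∧ deriv h b = 0) ∧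
        (∀ b ∈ Set.Ioo (a j) (arcEnd L a j), deriv h b = 0 →
          h b * deriv (deriv h) b < 0)) ∧
      (∀ j : Fin (2 * N),
        ((∀ x ∈ Set.Ioo (a j) (arcEnd L a j), 0 < h x) ∨
          (∀ x ∈ Set.Ioo (a j) (arcEnd L a j), h x < 0)) ∧
        ConcaveOn ℝ (Set.Ioo (a j) (arcEnd L a j)) (fun x => |h x|)) := by
  classical
  have hc0 : Continuous h := hd1.continuous
  have hc1 : Continuous (deriv h) := hd2.continuous
  -- Stage 1 : the zero set
  have hfin : Set.Finite {x ∈ Set.Ico (0:ℝ) L | h x = 0} :=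
    (zeros_finite (L := L) hd1 hc1 H1).subset
      (fun x hx => ⟨Set.Ico_subset_Icc_self hx.1, hx.2⟩)
  set Z : Finset ℝ := hfin.toFinset with hZdef
  have hZmem : ∀ x, x ∈ Z ↔ x ∈ Set.Ico (0:ℝ) L ∧ h x = 0 := by
    intro x; rw [hZdef, Set.Finite.mem_toFinset]; exact Iff.rfl
  have hZne : Z.Nonempty := by
    obtain ⟨z, hz, hz0⟩ := exists_zero hL hper hd1 hd2 hc2 H2 H3
    exact ⟨z, (hZmem z).2 ⟨hz, hz0⟩⟩
  set m := Z.card with hmdef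
  have hm0 : 0 < m := Finset.card_pos.2 hZne
  set A : Fin m ↪o ℝ := Z.orderEmbOfFin hmdef.symm with hAdef
  have hAmem : ∀ i, A i ∈ Set.Ico (0:ℝ) L ∧ h (A i) = 0 :=
    fun i => (hZmem _).1 (Z.orderEmbOfFin_mem hmdef.symm i)
  have hAmono : StrictMono A := (Z.orderEmbOfFin hmdef.symm).strictMono
  have hsurj : ∀ x ∈ Set.Ico (0:ℝ) L, h x = 0 → ∃ i, A i = x := by
    intro x hx hx0
    have : x ∈ (Z : Set ℝ) := (hZmem x).2 ⟨hx, hx0⟩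
    rw [← Z.range_orderEmbOfFin hmdef.symm] at this
    exact this
  -- Stage 2 : the cyclic sequence of zeros
  set c : ℕ → ℝ := fun i => if hi : i < m then A ⟨i, hi⟩ else A ⟨0, hm0⟩ + L with hcdef
  have hceq : ∀ i (hi : i < m), c i = A ⟨i, hi⟩ := fun i hi => dif_pos hi
  have hcm : ∀ i, m ≤ i → c i = A ⟨0, hm0⟩ + L := fun i hi => dif_neg (by omega)
  have hcIco : ∀ i (hi : i < m), c i ∈ Set.Ico (0:ℝ) L := by
    intro i hi; rw [hceq i hi]; exact (hAmem _).1
  have hcmono : ∀ i j, i < j → j ≤ m → c i < c j := by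
    intro i j hij hjm
    have him : i < m := by omega
    rcases lt_or_eq_of_le hjm with hjm' | heq
    · rw [hceq i him, hceq j hjm']
      exact hAmono (by simpa [Fin.lt_def] using hij)
    · rw [heq, hceq i him, hcm m le_rfl]
      have h2 : (0:ℝ) ≤ A ⟨0, hm0⟩ := (hAmem ⟨0, hm0⟩).1.1
      linarith [(hAmem ⟨i, him⟩).1.2]
  have hczero : ∀ i, i ≤ m → h (c i) = 0 := by
    intro i hi
    rcases lt_or_eq_of_le hi with hi' | heq
    · rw [hceq i hi']; exact (hAmem _).2
    · rw [heq, hcm m le_rfl, hper]; exact (hAmem _).2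
  have hcderiv : ∀ i, i ≤ m → deriv h (c i) ≠ 0 := fun i hi => H1 _ (hczero i hi)
  -- no zeros inside the arcs
  have hno : ∀ i, i < m → ∀ x ∈ Set.Ioo (c i) (c (i+1)), h x ≠ 0 := by
    intro i hi x hx hx0
    by_cases hi1 : i + 1 < m
    · rw [hceq i (by omega), hceq (i+1) hi1] at hx
      have hxIco : x ∈ Set.Ico (0:ℝ) L :=
        ⟨le_of_lt (lt_of_le_of_lt (hAmem ⟨i, by omega⟩).1.1 hx.1),
         lt_trans hx.2 (hAmem ⟨i+1, hi1⟩).1.2⟩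
      obtain ⟨k, hk⟩ := hsurj x hxIco hx0
      have h1 : (⟨i, by omega⟩ : Fin m) < k := hAmono.lt_iff_lt.1 (by rw [hk]; exact hx.1)
      have h2 : k < (⟨i+1, hi1⟩ : Fin m) := hAmono.lt_iff_lt.1 (by rw [hk]; exact hx.2)
      rw [Fin.lt_def] at h1 h2
      simp at h1 h2
      omega
    · have hieq : i + 1 = m := by omega
      rw [hceq i (by omega), hcm (i+1) (by omega)] at hx
      rcases lt_or_ge x L with hxL | hxL
      · have hxIco : x ∈ Set.Ico (0:ℝ) L :=
          ⟨le_of_lt (lt_of_le_of_lt (hAmem ⟨i, by omega⟩).1.1 hx.1), hxL⟩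
        obtain ⟨k, hk⟩ := hsurj x hxIco hx0
        have h1 : (⟨i, by omega⟩ : Fin m) < k := hAmono.lt_iff_lt.1 (by rw [hk]; exact hx.1)
        rw [Fin.lt_def] at h1
        simp at h1
        have := k.isLt
        omega
      · have hx0' : h (x - L) = 0 := by
          have := hper (x - L); rw [sub_add_cancel] at this; rw [← hx0]; exact this.symm
        have hxIco : x - L ∈ Set.Ico (0:ℝ) L := by
          constructor
          · linarith
          · have h2 : x < A ⟨0, hm0⟩ + L := hx.2
            have h3 : A ⟨0, hm0⟩ < L := (hAmem ⟨0, hm0⟩).1.2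
            linarith
        obtain ⟨k, hk⟩ := hsurj (x - L) hxIco hx0'
        have hk0 : A ⟨0, hm0⟩ ≤ A k := hAmono.monotone (by simp [Fin.le_def])
        have : x - L < A ⟨0, hm0⟩ := by
          have h2 : x < A ⟨0, hm0⟩ + L := hx.2
          linarith
        rw [hk] at hk0
        linarith
  -- sign constancy on each arc
  have harcne : ∀ i, i < m → (Set.Ioo (c i) (c (i+1))).Nonempty :=
    fun i hi => Set.nonempty_Ioo.2 (hcmono i (i+1) (by omega) (by omega))
  have hsign : ∀ i, i < m → (∀ x ∈ Set.Ioo (c i) (c (i+1)), 0 < h x) ∨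
      (∀ x ∈ Set.Ioo (c i) (c (i+1)), h x < 0) := by
    intro i hi
    by_contra hcon
    push_neg at hcon
    obtain ⟨⟨x1, hx1, hx1'⟩, ⟨x2, hx2, hx2'⟩⟩ := hcon
    have hx1n : h x1 < 0 := lt_of_le_of_ne hx1' (hno i hi x1 hx1)
    have hx2p : 0 < h x2 := lt_of_le_of_ne hx2' (Ne.symm (hno i hi x2 hx2))
    obtain ⟨z, hz, hz0⟩ := intermediate_value_uIcc (a := x1) (b := x2) (f := h)
      hc0.continuousOn (show (0:ℝ) ∈ Set.uIcc (h x1) (h x2) by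
        rw [Set.mem_uIcc]; left; constructor <;> linarith)
    exact hno i hi z (Set.ordConnected_Ioo.uIcc_subset hx1 hx2 hz) hz0
  -- alternation of signs between adjacent arcs
  set P : ℕ → Prop := fun i => ∀ x ∈ Set.Ioo (c i) (c (i+1)), 0 < h x with hPdef
  have hPneg : ∀ i, i < m → ¬ P i → ∀ x ∈ Set.Ioo (c i) (c (i+1)), h x < 0 := by
    intro i hi hnP
    rcases hsign i hi with hp | hn
    · exact absurd hp hnP
    · exact hn
  have halt : ∀ i, i + 1 < m → (P i ↔ ¬ P (i+1)) := by
    intro i hi1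
    have hi : i < m := by omega
    have hlt1 : c i < c (i+1) := hcmono i (i+1) (by omega) (by omega)
    have hlt2 : c (i+1) < c (i+2) := hcmono (i+1) (i+2) (by omega) (by omega)
    constructor
    · intro hPi hPi1
      -- local minimum at c (i+1)
      have hmin : IsLocalMin h (c (i+1)) := by
        filter_upwards [Ioo_mem_nhds hlt1 hlt2] with x hx
        rw [hczero (i+1) (by omega)]
        rcases lt_trichotomy x (c (i+1)) with hlt | heq | hgt
        · exact (hPi x ⟨hx.1, hlt⟩).le
        · rw [heq, hczero (i+1) (by omega)]
        · exact (hPi1 x ⟨hgt, hx.2⟩).le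
      exact hcderiv (i+1) (by omega) hmin.deriv_eq_zero
    · intro hnPi1
      by_contra hnPi
      have hNi := hPneg i hi hnPi
      have hNi1 := hPneg (i+1) (by omega) hnPi1
      have hmax : IsLocalMax h (c (i+1)) := by
        filter_upwards [Ioo_mem_nhds hlt1 hlt2] with x hx
        rw [hczero (i+1) (by omega)]
        rcases lt_trichotomy x (c (i+1)) with hlt | heq | hgt
        · exact (hNi x ⟨hx.1, hlt⟩).le
        · rw [heq, hczero (i+1) (by omega)]
        · exact (hNi1 x ⟨hgt, hx.2⟩).le
      exact hcderiv (i+1) (by omega) hmax.deriv_eq_zero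
  -- wrap-around alternation at c 0
  have hwrap : P (m-1) ↔ ¬ P 0 := by
    have hm1m : m - 1 < m := by omega
    have hme : m - 1 + 1 = m := by omega
    have hcme : c (m - 1 + 1) = c m := by rw [hme]
    have hlt0 : c (m-1) - L < c 0 := by
      have := hcmono (m-1) m (by omega) le_rfl
      rw [hcm m le_rfl] at this
      rw [hceq 0 hm0]
      linarith
    have hlt1 : c 0 < c 1 := hcmono 0 1 (by omega) (by omega)
    have htrans : ∀ x ∈ Set.Ioo (c (m-1) - L) (c 0), x + L ∈ Set.Ioo (c (m-1)) (c m) := by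
      intro x hx
      constructor
      · linarith [hx.1]
      · rw [hcm m le_rfl, ← hceq 0 hm0]
        linarith [hx.2]
    constructor
    · intro hPl hP0
      have hmin : IsLocalMin h (c 0) := by
        filter_upwards [Ioo_mem_nhds hlt0 hlt1] with x hx
        rw [hczero 0 (by omega)]
        rcases lt_trichotomy x (c 0) with hlt | heq | hgt
        · have hx' := htrans x ⟨hx.1, hlt⟩
          rw [← hper x]
          exact (hPl (x + L) (by rw [hcme]; exact hx')).le
        · rw [heq, hczero 0 (by omega)]
        · exact (hP0 x ⟨hgt, hx.2⟩).le
      exact hcderiv 0 (by omega) hmin.deriv_eq_zero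
    · intro hnP0
      by_contra hnPl
      have hN0 := hPneg 0 (by omega) hnP0
      have hNl := hPneg (m-1) hm1m hnPl
      have hmax : IsLocalMax h (c 0) := by
        filter_upwards [Ioo_mem_nhds hlt0 hlt1] with x hx
        rw [hczero 0 (by omega)]
        rcases lt_trichotomy x (c 0) with hlt | heq | hgt
        · have hx' := htrans x ⟨hx.1, hlt⟩
          rw [← hper x]
          exact (hNl (x + L) (by rw [hcme]; exact hx')).le
        · rw [heq, hczero 0 (by omega)]
        · exact (hN0 x ⟨hgt, hx.2⟩).le
      exact hcderiv 0 (by omega) hmax.deriv_eq_zero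
  -- parity: m is even
  have hpar : ∀ i, i < m → (P i ↔ (Even i ↔ P 0)) := by
    intro i
    induction i with
    | zero => intro _; simp [Nat.even_iff]
    | succ n ih =>
      intro hn1
      have hn : n < m := by omega
      have h1 := ih hn
      have h2 := halt n hn1
      rw [Nat.even_add_one]
      tauto
  have heven : Even m := by
    have h1 := hpar (m-1) (by omega)
    by_contra hodd
    have hoddm : Odd m := Nat.not_even_iff_odd.1 hodd
    have : Even (m - 1) := by
      obtain ⟨k, hk⟩ := hoddm
      exact ⟨k, by omega⟩
    tauto
  -- per-arc analytic facts
  have hit2 : deriv^[2] h = deriv (deriv h) := rfl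
  have hconc : ∀ i, i < m → ConcaveOn ℝ (Set.Ioo (c i) (c (i+1))) (fun x => |h x|) := by
    intro i hi
    rcases hsign i hi with hp | hn
    · have hcc : ConcaveOn ℝ (Set.Ioo (c i) (c (i+1))) h := by
        refine concaveOn_of_deriv2_nonpos' (convex_Ioo _ _) hd1.differentiableOn
          hd2.differentiableOn ?_
        intro x hx
        rw [hit2]
        nlinarith [H3 x, hp x hx]
      exact concaveOn_congr'' hcc (fun x hx => (abs_of_pos (hp x hx)).symm)
    · have hcx : ConvexOn ℝ (Set.Ioo (c i) (c (i+1))) h := by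
        refine convexOn_of_deriv2_nonneg' (convex_Ioo _ _) hd1.differentiableOn
          hd2.differentiableOn ?_
        intro x hx
        rw [hit2]
        nlinarith [H3 x, hn x hx]
      exact concaveOn_congr'' hcx.neg (fun x hx => by simp [abs_of_neg (hn x hx)])
  have hcritsign : ∀ i, i < m → ∀ b ∈ Set.Ioo (c i) (c (i+1)), deriv h b = 0 →
      h b * deriv (deriv h) b < 0 := by
    intro i hi b hb hb0
    exact lt_of_le_of_ne (H3 b) (mul_ne_zero (hno i hi b hb) (H2 b hb0))
  have hcritex : ∀ i, i < m → ∃ b ∈ Set.Ioo (c i) (c (i+1)), deriv h b = 0 :=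
    fun i hi => exists_deriv_eq_zero (hcmono i (i+1) (by omega) (by omega))
      hc0.continuousOn (by rw [hczero i (by omega), hczero (i+1) (by omega)])
  have hcritlt : ∀ i, i < m → ∀ b1 b2, b1 ∈ Set.Ioo (c i) (c (i+1)) →
      b2 ∈ Set.Ioo (c i) (c (i+1)) →
      deriv h b1 = 0 → deriv h b2 = 0 → b1 < b2 → False := by
    intro i hi b1 b2 hb1 hb2 hd1' hd2' hlt
    have hall : ∀ t ∈ Set.Icc b1 b2, deriv h t = 0 := by
      rcases hsign i hi with hp | hn
      · have hanti : AntitoneOn (deriv h) (Set.Ioo (c i) (c (i+1))) := by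
          refine antitoneOn_of_deriv_nonpos (convex_Ioo _ _) hd2.continuous.continuousOn
            (hd2.differentiableOn.mono interior_subset) ?_
          intro x hx
          rw [interior_Ioo] at hx
          nlinarith [H3 x, hp x hx]
        intro t ht
        have htmem : t ∈ Set.Ioo (c i) (c (i+1)) :=
          ⟨lt_of_lt_of_le hb1.1 ht.1, lt_of_le_of_lt ht.2 hb2.2⟩
        have e1 : deriv h t ≤ deriv h b1 := hanti hb1 htmem ht.1
        have e2 : deriv h b2 ≤ deriv h t := hanti htmem hb2 ht.2
        rw [hd1'] at e1; rw [hd2'] at e2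
        linarith
      · have hmono : MonotoneOn (deriv h) (Set.Ioo (c i) (c (i+1))) := by
          refine monotoneOn_of_deriv_nonneg (convex_Ioo _ _) hd2.continuous.continuousOn
            (hd2.differentiableOn.mono interior_subset) ?_
          intro x hx
          rw [interior_Ioo] at hx
          nlinarith [H3 x, hn x hx]
        intro t ht
        have htmem : t ∈ Set.Ioo (c i) (c (i+1)) :=
          ⟨lt_of_lt_of_le hb1.1 ht.1, lt_of_le_of_lt ht.2 hb2.2⟩
        have e1 : deriv h b1 ≤ deriv h t := hmono hb1 htmem ht.1
        have e2 : deriv h t ≤ deriv h b2 := hmono htmem hb2 ht.2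
        rw [hd1'] at e1; rw [hd2'] at e2
        linarith
    set mid := (b1 + b2) / 2 with hmiddef
    have hmid : mid ∈ Set.Ioo b1 b2 := ⟨by rw [hmiddef]; linarith, by rw [hmiddef]; linarith⟩
    have hev : deriv h =ᶠ[𝓝 mid] (fun _ => (0:ℝ)) := by
      filter_upwards [Ioo_mem_nhds hmid.1 hmid.2] with t ht
      exact hall t ⟨ht.1.le, ht.2.le⟩
    have hdd : deriv (deriv h) mid = 0 := by
      rw [hev.deriv_eq]; exact deriv_const _ _
    exact H2 mid (hall mid ⟨hmid.1.le, hmid.2.le⟩) hdd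
  have hcrituniq : ∀ i, i < m → ∀ b1 b2, b1 ∈ Set.Ioo (c i) (c (i+1)) →
      b2 ∈ Set.Ioo (c i) (c (i+1)) → deriv h b1 = 0 → deriv h b2 = 0 → b1 = b2 := by
    intro i hi b1 b2 hb1 hb2 hd1' hd2'
    rcases lt_trichotomy b1 b2 with hlt | heq | hgt
    · exact absurd (hcritlt i hi b1 b2 hb1 hb2 hd1' hd2' hlt) (not_false)
    · exact heq
    · exact absurd (hcritlt i hi b2 b1 hb2 hb1 hd2' hd1' hgt) (not_false)
  -- assembly
  obtain ⟨N, hNN⟩ := heven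
  have hN1 : 1 ≤ N := by omega
  have hm2N : m = 2 * N := by omega
  have hjlt : ∀ j : Fin (2 * N), (j : ℕ) < m := fun j => by have := j.isLt; omega
  have harcEnd : ∀ j : Fin (2 * N),
      arcEnd L (fun j : Fin (2*N) => c (j : ℕ)) j = c ((j : ℕ) + 1) := by
    intro j
    rw [arcEnd]
    by_cases hj : (j : ℕ) + 1 < 2 * N
    · rw [dif_pos hj]
    · rw [dif_neg hj]
      have hj1 : (j : ℕ) + 1 = m := by have := j.isLt; omega
      show c 0 + L = c ((j : ℕ) + 1)
      rw [hj1, hcm m le_rfl, hceq 0 hm0]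
  refine ⟨N, hN1, fun j => c (j : ℕ), ?_, ?_, ?_, ?_, ?_, ?_⟩
  · intro j k hjk
    exact hcmono _ _ (by exact_mod_cast hjk) (le_of_lt (hjlt k))
  · intro j
    exact hcIco _ (hjlt j)
  · ext x
    constructor
    · rintro ⟨hx, hx0⟩
      obtain ⟨idx, hidx⟩ := hsurj x hx hx0
      refine ⟨⟨(idx : ℕ), by have := idx.isLt; omega⟩, ?_⟩
      show c ((idx : ℕ)) = x
      rw [hceq _ idx.isLt]
      simpa using hidx
    · rintro ⟨j, rfl⟩
      show c (j : ℕ) ∈ Set.Ico (0:ℝ) L ∧ h (c (j:ℕ)) = 0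
      exact ⟨hcIco _ (hjlt j), hczero _ (le_of_lt (hjlt j))⟩
  · intro j
    exact hcderiv _ (le_of_lt (hjlt j))
  · intro j
    rw [harcEnd j]
    constructor
    · obtain ⟨b, hb, hb0⟩ := hcritex (j : ℕ) (hjlt j)
      exact ⟨b, ⟨hb, hb0⟩, fun b' ⟨hb', hb0'⟩ =>
        hcrituniq (j : ℕ) (hjlt j) b' b hb' hb hb0' hb0⟩
    · intro b hb hb0
      exact hcritsign (j : ℕ) (hjlt j) b hb hb0
  · intro j
    rw [harcEnd j]
    exact ⟨hsign (j : ℕ) (hjlt j), hconc (j : ℕ) (hjlt j)⟩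

end GeomCharAux

/-- Geometric characterization of the conditions (H1), (H2), (H3) for a periodic
`C³` function `h`: they hold if and only if there is an integer `N ≥ 1` such that
(1) `h` has exactly `2N` zeros in one period, all simple;
(2) `h` has exactly one critical point in each (cyclic) open arc between
consecutive zeros, at which `h·h'' < 0`;
(3) on each such arc `h` has constant sign and `|h|` is concave. -/
theorem geometric_characterization_H1_H2_H3
    (L : ℝ) (hL : 0 < L)
    (h : ℝ → ℝ) (hreg : ContDiff ℝ 3 h) (hper : Function.Periodic h L) :
    (CondH1 h ∧ CondH2 h ∧ CondH3 h) ↔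
      ∃ N : ℕ, 1 ≤ N ∧ ∃ a : Fin (2 * N) → ℝ,
        StrictMono a ∧ (∀ j, a j ∈ Set.Ico (0 : ℝ) L) ∧
        -- (1) the zeros of `h` in one period are exactly `a 0 < ⋯ < a (2N-1)`,
        -- and they are all simple
        ({x ∈ Set.Ico (0 : ℝ) L | h x = 0} = Set.range a) ∧
        (∀ j, deriv h (a j) ≠ 0) ∧
        -- (2) exactly one critical point in each cyclic open arc between
        -- consecutive zeros, with `h·h'' < 0` there
        (∀ j : Fin (2 * N),
          (∃! b : ℝ, b ∈ Set.Ioo (a j) (arcEnd L a j) ∧ deriv h b = 0) ∧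
          (∀ b ∈ Set.Ioo (a j) (arcEnd L a j), deriv h b = 0 →
            h b * deriv (deriv h) b < 0)) ∧
        -- (3) on each cyclic open arc, `h` has constant sign and `|h|` is concave
        (∀ j : Fin (2 * N),
          ((∀ x ∈ Set.Ioo (a j) (arcEnd L a j), 0 < h x) ∨
            (∀ x ∈ Set.Ioo (a j) (arcEnd L a j), h x < 0)) ∧
          ConcaveOn ℝ (Set.Ioo (a j) (arcEnd L a j)) (fun x => |h x|)) := by
  obtain ⟨hd1, hd2, hc2⟩ := c3_facts h hreg
  constructor
  · rintro ⟨h1, h2, h3⟩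
    exact forward_dir L hL h hd1 hd2 hc2 hper h1 h2 h3
  · rintro ⟨N, hN, a, hmono, haIco, hzeros, hderiv, hcrit, hsg⟩
    obtain ⟨H1, H2, H3⟩ := reverse_dir L hL h hd1 hd2 hper hN a hmono haIco hzeros
      hderiv hcrit hsg
    exact ⟨H1, H2, H3⟩
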